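/- Define f_SD(T) := (D + (M−ℓ)(T−1) + min(G, (M−ℓ)B)) / (D + min((M−ℓ)·min(T,B), G)) for positive integers T (the worst-case state-dependent competitive ratio of the symmetric threshold policy with threshold T at the given state). Suppose T* := min(G/(M−ℓ), B) is a positive integer. Then f_SD(T*) ≤ f_SD(T) for every positive integer T, and f_SD(T*) = 1 + (min(G,(M−ℓ)B) − (M−ℓ))/(D + min(G, (M−ℓ)B)); equivalently f_SD(T*) equals 1 + (G − (M−ℓ))/(D + G) if G ≤ (M−ℓ)B and equals 1 + (M−ℓ)(B−1)/(D + (M−ℓ)B) if G > (M−ℓ)B. -/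

import Mathlib

/-- The state-dependent-optimal threshold `T* = min(G/(M-ℓ), B)` minimizes the worst-case
state-dependent competitive ratio `f_SD` among all positive integer thresholds, and its
value is given by the stated closed form / case distinction. -/
theorem stmt4 (M B G ℓ : ℕ) (hM : 2 ≤ M) (hB : 1 ≤ B)
    (hBG : B < G) (hGMB : G < M * B) (hℓ : ℓ ≤ M - 1)
    (N : ℕ → ℕ) (hN0 : N 0 = 0)
    (hNpos : ∀ n, 1 ≤ n → n ≤ ℓ → 0 < N n)
    (hNmono : ∀ i j, 1 ≤ i → i ≤ j → j ≤ ℓ → N i ≤ N j)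
    (D : ℕ) (hD : D = ∑ n ∈ Finset.Icc 1 ℓ, N n)
    (fSD : ℕ → ℝ)
    (hfSD : ∀ T : ℕ, fSD T =
      ((D + (M - ℓ) * (T - 1) + min G ((M - ℓ) * B) : ℕ) : ℝ) /
      ((D + min ((M - ℓ) * min T B) G : ℕ) : ℝ))
    (Tstar : ℕ) (hTpos : 0 < Tstar)
    (hTstar : (Tstar : ℝ) = min ((G : ℝ) / ((M : ℝ) - (ℓ : ℝ))) (B : ℝ)) :
    (∀ T : ℕ, 0 < T → fSD Tstar ≤ fSD T) ∧
    fSD Tstar = 1 + (((min G ((M - ℓ) * B) : ℕ) : ℝ) - ((M : ℝ) - (ℓ : ℝ))) /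
      ((D + min G ((M - ℓ) * B) : ℕ) : ℝ) ∧
    (G ≤ (M - ℓ) * B →
      fSD Tstar = 1 + ((G : ℝ) - ((M : ℝ) - (ℓ : ℝ))) / ((D : ℝ) + (G : ℝ))) ∧
    ((M - ℓ) * B < G →
      fSD Tstar = 1 + ((M : ℝ) - (ℓ : ℝ)) * ((B : ℝ) - 1) /
        ((D : ℝ) + ((M : ℝ) - (ℓ : ℝ)) * (B : ℝ))) := by
  have hℓM : ℓ < M := by omega
  set k := M - ℓ with hkdef
  have hkpos : 0 < k := by omega
  have hkR : ((M : ℝ) - (ℓ : ℝ)) = (k : ℝ) := by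
    rw [hkdef]
    push_cast [Nat.cast_sub hℓM.le]
    ring
  have hkR0 : (0 : ℝ) < (k : ℝ) := by exact_mod_cast hkpos
  set m := min G (k * B) with hmdef
  have hGpos : 0 < G := by omega
  rw [hkR] at hTstar
  -- key: k * Tstar = m
  have hmk : k * Tstar = m := by
    rcases le_or_gt G (k * B) with hcase | hcase
    · have h1 : (G : ℝ) / (k : ℝ) ≤ (B : ℝ) := by
        rw [div_le_iff₀ hkR0]
        have : (G : ℝ) ≤ (k : ℝ) * (B : ℝ) := by exact_mod_cast hcase
        linarith
      have h2 : (Tstar : ℝ) = (G : ℝ) / (k : ℝ) := by rw [hTstar, min_eq_left h1]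
      have h3 : (k : ℝ) * (Tstar : ℝ) = (G : ℝ) := by
        rw [h2]; field_simp
      have h4 : k * Tstar = G := by exact_mod_cast h3
      rw [hmdef, min_eq_left hcase, h4]
    · have h1 : (B : ℝ) ≤ (G : ℝ) / (k : ℝ) := by
        rw [le_div_iff₀ hkR0]
        have : (k : ℝ) * (B : ℝ) ≤ (G : ℝ) := by exact_mod_cast hcase.le
        linarith
      have h2 : (Tstar : ℝ) = (B : ℝ) := by rw [hTstar, min_eq_right h1]
      have h3 : Tstar = B := by exact_mod_cast h2
      rw [hmdef, min_eq_right hcase.le, h3]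
  have hmG : m ≤ G := min_le_left _ _
  have hmkB : m ≤ k * B := min_le_right _ _
  have hTB : Tstar ≤ B := Nat.le_of_mul_le_mul_left (by omega) hkpos
  have hkm : k ≤ m := by calc k = k * 1 := by omega
                              _ ≤ k * Tstar := Nat.mul_le_mul_left k hTpos
                              _ = m := hmk
  obtain ⟨t, rfl⟩ : ∃ t, Tstar = t + 1 := ⟨Tstar - 1, by omega⟩
  have hkt : k * t + k = m := by rw [← hmk]; ring
  -- value of fSD Tstar
  have hdenpos : (0 : ℝ) < ((D + m : ℕ) : ℝ) := by
    have : 0 < D + m := by omega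
    exact_mod_cast this
  have hstar : fSD (t + 1) = ((D + k * t + m : ℕ) : ℝ) / ((D + m : ℕ) : ℝ) := by
    rw [hfSD]
    simp only [Nat.add_sub_cancel]
    rw [min_eq_left hTB, hmk, min_eq_left hmG]
  have hval : fSD (t + 1) = 1 + ((m : ℝ) - (k : ℝ)) / ((D : ℝ) + (m : ℝ)) := by
    rw [hstar]
    have hd : (0 : ℝ) < (D : ℝ) + (m : ℝ) := by
      have : 0 < D + m := by omega
      exact_mod_cast this
    have hmkR : (m : ℝ) - (k : ℝ) = ((k * t : ℕ) : ℝ) := by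
      push_cast
      have : (k : ℝ) * t + k = m := by exact_mod_cast hkt
      linarith
    rw [hmkR]
    push_cast
    field_simp
    ring
  refine ⟨?_, ?_, ?_, ?_⟩
  · intro T hT
    obtain ⟨s, rfl⟩ : ∃ s, T = s + 1 := ⟨T - 1, by omega⟩
    rw [hstar, hfSD]
    have hnum : (D + k * ((s + 1) - 1) + m : ℕ) = D + k * s + m := by
      congr 2
    set dT := min (k * min (s + 1) B) G with hdT
    have hdTpos : 0 < dT := by
      apply lt_min
      · exact Nat.mul_pos hkpos (by omega)
      · exact hGpos
    have hdenT : (0 : ℝ) < ((D + dT : ℕ) : ℝ) := by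
      have : 0 < D + dT := by omega
      exact_mod_cast this
    rw [hnum, div_le_div_iff₀ hdenpos hdenT]
    have key : (D + k * t + m) * (D + dT) ≤ (D + k * s + m) * (D + m) := by
      rcases le_or_gt t s with hts | hts
      · -- T ≥ Tstar
        have h1 : dT ≤ m := by
          rw [hdT, hmdef]
          exact le_min (min_le_right _ _)
            (le_trans (min_le_left _ _) (Nat.mul_le_mul_left k (min_le_right _ _)))
        exact Nat.mul_le_mul (by have := Nat.mul_le_mul_left k hts; omega) (by omega)
      · -- T < Tstar
        have hs1 : s + 1 ≤ B := by
          have : s + 1 ≤ t + 1 := by omega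
          omega
        have h2 : k * (s + 1) ≤ m := by
          calc k * (s + 1) ≤ k * (t + 1) := Nat.mul_le_mul_left k (by omega)
            _ = m := hmk
        have hdTval : dT = k * s + k := by
          rw [hdT, min_eq_left hs1, min_eq_left (le_trans h2 hmG)]
          ring
        rw [hdTval]
        have hab : k * s ≤ k * t := Nat.mul_le_mul_left k hts.le
        nlinarith [mul_le_mul_right hab (k * t), hkt]
    calc ((D + k * t + m : ℕ) : ℝ) * ((D + dT : ℕ) : ℝ)
        = (((D + k * t + m) * (D + dT) : ℕ) : ℝ) := by push_cast; ring
      _ ≤ (((D + k * s + m) * (D + m) : ℕ) : ℝ) := by exact_mod_cast key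
      _ = ((D + k * s + m : ℕ) : ℝ) * ((D + m : ℕ) : ℝ) := by push_cast; ring
  · rw [hval, hkR]
    push_cast
    ring
  · intro hG
    have : m = G := min_eq_left hG
    rw [hval, hkR, this]
  · intro hG
    have hm : m = k * B := min_eq_right hG.le
    rw [hval, hkR, hm]
    push_cast
    ring_nf
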